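/- Let (Ω, 𝓕, π) be a σ-finite measure space and let ν ≪ π be a measure with density f = dν/dπ such that C := ν(Ω) ∈ (0, ∞). Then the infimum of D_KL(μ, ν) over all probability measures μ on (Ω, 𝓕) with μ ≪ π equals −log C, and the infimum is attained by the probability measure μ* with dμ*/dπ = C⁻¹ f. -/

import Mathlib

open MeasureTheory
open scoped Classical

/-- Kullback–Leibler divergence: `D_KL(μ, ν) = ∫ log(dμ/dν) dμ` if `μ ≪ ν` (and the
log-likelihood ratio is integrable), and `∞` otherwise. Valued in `EReal = (-∞, ∞]` here. -/
noncomputable def klDiv {Ω : Type*} [MeasurableSpace Ω] (μ ν : Measure Ω) : EReal :=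
  if μ ≪ ν ∧ Integrable (llr μ ν) μ then ((∫ x, llr μ ν x ∂μ : ℝ) : EReal) else ⊤

lemma gibbs {Ω : Type*} [MeasurableSpace Ω] {μ ν : Measure Ω} [IsProbabilityMeasure μ]
    [IsProbabilityMeasure ν] (hμν : μ ≪ ν) (h : Integrable (llr μ ν) μ) :
    0 ≤ ∫ x, llr μ ν x ∂μ := by
  have hint : Integrable (fun x ↦ Real.exp (-llr μ ν x)) μ :=
    (Measure.integrable_toReal_rnDeriv (μ := ν) (ν := μ)).congr (exp_neg_llr hμν).symm
  have hJ := convexOn_exp.map_integral_le Real.continuous_exp.continuousOn isClosed_univ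
    (Filter.Eventually.of_forall fun x ↦ Set.mem_univ _) h.neg hint
  simp only [Pi.neg_apply] at hJ
  rw [integral_neg] at hJ
  have heq : ∫ x, Real.exp (-llr μ ν x) ∂μ = ∫ x, (ν.rnDeriv μ x).toReal ∂μ :=
    integral_congr_ae (exp_neg_llr hμν)
  have hle : ∫ x, (ν.rnDeriv μ x).toReal ∂μ ≤ 1 := by
    rw [Measure.integral_toReal_rnDeriv']
    have : (ν Set.univ).toReal = 1 := by simp
    have h2 : (0:ℝ) ≤ (ν.singularPart μ Set.univ).toReal := ENNReal.toReal_nonneg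
    unfold Measure.real
    linarith
  have h1 : Real.exp (-∫ x, llr μ ν x ∂μ) ≤ 1 := le_trans hJ (heq ▸ hle)
  have := Real.exp_le_one_iff.mp h1
  linarith

/-- Lemma B1: on a σ-finite measure space `(Ω, 𝓕, π)`, for `ν ≪ π` with density `f` and
`C = ν(Ω) ∈ (0, ∞)`, the infimum of `D_KL(μ, ν)` over probability measures `μ ≪ π` is
`−log C`, attained at `μ*` with `dμ*/dπ = C⁻¹ f`. -/
theorem stmt1 {Ω : Type*} [MeasurableSpace Ω] (π ν : Measure Ω) [SigmaFinite π]
    (f : Ω → ENNReal) (hf : Measurable f) (hν : ν = π.withDensity f)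
    (hC0 : ν Set.univ ≠ 0) (hCtop : ν Set.univ ≠ ⊤) :
    IsLeast {r : EReal | ∃ μ : Measure Ω, IsProbabilityMeasure μ ∧ μ ≪ π ∧ klDiv μ ν = r}
      ((-Real.log (ν Set.univ).toReal : ℝ) : EReal) ∧
    IsProbabilityMeasure (π.withDensity fun x => (ν Set.univ)⁻¹ * f x) ∧
    (π.withDensity fun x => (ν Set.univ)⁻¹ * f x) ≪ π ∧
    klDiv (π.withDensity fun x => (ν Set.univ)⁻¹ * f x) ν
      = ((-Real.log (ν Set.univ).toReal : ℝ) : EReal) := by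
  set C := ν Set.univ with hCdef
  set μs : Measure Ω := π.withDensity fun x => C⁻¹ * f x with hμs
  have hνfin : IsFiniteMeasure ν := ⟨lt_of_le_of_ne le_top hCtop⟩
  -- μs = C⁻¹ • ν
  have hμs_eq : μs = C⁻¹ • ν := by
    rw [hμs, hν, ← withDensity_smul _ hf]
    rfl
  have hν_eq : ν = C • μs := by
    rw [hμs_eq, smul_smul, ENNReal.mul_inv_cancel hC0 hCtop, one_smul]
  -- μs is a probability measure
  have hprob : IsProbabilityMeasure μs := by
    constructor
    rw [hμs_eq]
    simp only [Measure.smul_apply, smul_eq_mul]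
    exact ENNReal.inv_mul_cancel hC0 hCtop
  have hμsπ : μs ≪ π := withDensity_absolutelyContinuous _ _
  have hμsν : μs ≪ ν := hμs_eq ▸ Measure.smul_absolutelyContinuous
  -- llr μs ν is a.e. constant -log C
  have hllr : llr μs ν =ᵐ[μs] fun _ => -Real.log C.toReal := by
    have h1 : llr (C⁻¹ • ν) ν =ᵐ[ν] fun x => llr ν ν x + Real.log (C⁻¹).toReal :=
      MeasureTheory.llr_smul_left Measure.AbsolutelyContinuous.rfl C⁻¹
        (by simp [hCtop]) (by simp [hC0])
    have h0 : llr ν ν =ᵐ[ν] fun _ => 0 := by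
      filter_upwards [Measure.rnDeriv_self ν] with x hx
      simp [llr, hx]
    have : llr μs ν =ᵐ[ν] fun _ => -Real.log C.toReal := by
      rw [hμs_eq]
      filter_upwards [h1, h0] with x hx1 hx0
      rw [hx1, hx0, ENNReal.toReal_inv, Real.log_inv]
      ring
    exact hμsν.ae_eq this
  have hint_s : Integrable (llr μs ν) μs :=
    (integrable_const _).congr hllr.symm
  have hint_val : ∫ x, llr μs ν x ∂μs = -Real.log C.toReal := by
    rw [integral_congr_ae hllr, integral_const]
    simp
  have hkl_s : klDiv μs ν = ((-Real.log C.toReal : ℝ) : EReal) := by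
    rw [klDiv, if_pos ⟨hμsν, hint_s⟩, hint_val]
  refine ⟨⟨⟨μs, hprob, hμsπ, hkl_s⟩, ?_⟩, hprob, hμsπ, hkl_s⟩
  -- lower bound
  rintro r ⟨μ, hμprob, hμπ, rfl⟩
  rw [klDiv]
  split_ifs with h
  · obtain ⟨hμν, hintμ⟩ := h
    have hμμs : μ ≪ μs := by
      rw [hν_eq] at hμν
      exact hμν.trans Measure.smul_absolutelyContinuous
    have hshift : llr μ ν =ᵐ[μ] fun x => llr μ μs x - Real.log C.toReal := by
      have := MeasureTheory.llr_smul_right hμμs C hC0 hCtop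
      rw [← hν_eq] at this
      exact this
    have hint2 : Integrable (llr μ μs) μ := by
      refine (hintμ.add (integrable_const (Real.log C.toReal))).congr ?_
      filter_upwards [hshift] with x hx
      rw [Pi.add_apply, hx]; ring
    have hgibbs : 0 ≤ ∫ x, llr μ μs x ∂μ := gibbs hμμs hint2
    have : ∫ x, llr μ ν x ∂μ = ∫ x, llr μ μs x ∂μ - Real.log C.toReal := by
      rw [integral_congr_ae hshift, integral_sub hint2 (integrable_const _), integral_const]
      simp
    rw [EReal.coe_le_coe_iff, this]
    linarith
  · exact le_top
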